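/- Let φ_0 : [a,b] → ℝ be continuous and define the Picard iterates φ_n(t) = λ ∫_a^t K(t,η) φ_{n-1}(η) dη + f(t) for n ≥ 1. Then for every n ≥ 1 and t ∈ [a,b], |φ_n(t) - φ_{n-1}(t)| ≤ |λ|^n L M^n (t-a)^n / n! + |λ|^{n-1} N M^{n-1} (t-a)^{n-1} / (n-1)!, where L = sup_{[a,b]} |φ_0|, M = sup_Ω |K|, and N = sup_{[a,b]} |f - φ_0|. -/

import Mathlib

open MeasureTheory intervalIntegral Set

/-- The Picard iterates of the Volterra equation of the second kind:
`φₙ(t) = λ ∫_a^t K(t,η) φ_{n-1}(η) dη + f(t)` for `n ≥ 1`, starting from `φ₀`. -/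
noncomputable def picard (K : ℝ → ℝ → ℝ) (f : ℝ → ℝ) (lam a : ℝ) (φ₀ : ℝ → ℝ) :
    ℕ → ℝ → ℝ
  | 0 => φ₀
  | n + 1 => fun t => lam * (∫ η in a..t, K t η * picard K f lam a φ₀ n η) + f t

/-- Tietze extension for real-valued functions continuous on a closed set. -/
lemma exists_cont_ext {X : Type*} [TopologicalSpace X] [NormalSpace X] {s : Set X}
    (hs : IsClosed s) {f : X → ℝ} (hf : ContinuousOn f s) :
    ∃ g : X → ℝ, Continuous g ∧ ∀ x ∈ s, g x = f x := by
  obtain ⟨g, hg⟩ := ContinuousMap.exists_restrict_eq hs ⟨s.restrict f, hf.restrict⟩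
  exact ⟨g, g.continuous, fun x hx => ContinuousMap.congr_fun hg ⟨x, hx⟩⟩

lemma integral_sub_pow (a t : ℝ) (k : ℕ) :
    ∫ η in a..t, (η - a) ^ k = (t - a) ^ (k + 1) / (k + 1) := by
  rw [intervalIntegral.integral_comp_sub_right (fun x => x ^ k) a, integral_pow]
  simp [sub_self]

lemma integral_term (a t c : ℝ) (k : ℕ) :
    ∫ η in a..t, c * (η - a) ^ k / (k.factorial : ℝ)
      = c * (t - a) ^ (k + 1) / ((k + 1).factorial : ℝ) := by
  have hfac : (((k + 1).factorial : ℕ) : ℝ) = (k + 1) * (k.factorial : ℝ) := by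
    rw [Nat.factorial_succ]; push_cast; ring
  have h0 : (k.factorial : ℝ) ≠ 0 := Nat.cast_ne_zero.mpr k.factorial_ne_zero
  have h1 : ((k : ℝ) + 1) ≠ 0 := by positivity
  rw [intervalIntegral.integral_div, intervalIntegral.integral_const_mul,
    integral_sub_pow, hfac]
  field_simp

/-- Key estimate for Picard iterates (continuous case `T = ℝ`, `hₙ(t,s) = (t-s)ⁿ/n!`):
for every `n ≥ 1` and `t ∈ [a,b]`,
`|φₙ(t) - φ_{n-1}(t)| ≤ |λ|ⁿ L Mⁿ (t-a)ⁿ/n! + |λ|^{n-1} N M^{n-1} (t-a)^{n-1}/(n-1)!`,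
where `L = sup |φ₀|`, `M = sup_Ω |K|` and `N = sup |f - φ₀|`. -/
theorem picard_difference_bound
    (a b : ℝ) (hab : a < b) (K : ℝ → ℝ → ℝ) (f : ℝ → ℝ) (lam : ℝ)
    (hK : ContinuousOn (fun p : ℝ × ℝ => K p.1 p.2)
      {p : ℝ × ℝ | a ≤ p.2 ∧ p.2 ≤ p.1 ∧ p.1 ≤ b})
    (hf : ContinuousOn f (Set.Icc a b))
    (φ₀ : ℝ → ℝ) (hφ₀ : ContinuousOn φ₀ (Set.Icc a b))
    (L M N : ℝ)
    (hL : L = sSup ((fun t => |φ₀ t|) '' Set.Icc a b))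
    (hM : M = sSup ((fun p : ℝ × ℝ => |K p.1 p.2|) ''
      {p : ℝ × ℝ | a ≤ p.2 ∧ p.2 ≤ p.1 ∧ p.1 ≤ b}))
    (hN : N = sSup ((fun t => |f t - φ₀ t|) '' Set.Icc a b)) :
    ∀ n : ℕ, ∀ t ∈ Set.Icc a b,
      |picard K f lam a φ₀ (n + 1) t - picard K f lam a φ₀ n t| ≤
        |lam| ^ (n + 1) * L * M ^ (n + 1) * (t - a) ^ (n + 1) / (n + 1).factorial +
          |lam| ^ n * N * M ^ n * (t - a) ^ n / n.factorial := by
  set Ω : Set (ℝ × ℝ) := {p : ℝ × ℝ | a ≤ p.2 ∧ p.2 ≤ p.1 ∧ p.1 ≤ b} with hΩ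
  have hΩclosed : IsClosed Ω :=
    (isClosed_le continuous_const continuous_snd).inter
      ((isClosed_le continuous_snd continuous_fst).inter
        (isClosed_le continuous_fst continuous_const))
  have hΩcomp : IsCompact Ω :=
    (isCompact_Icc.prod isCompact_Icc).of_isClosed_subset hΩclosed
      (fun p hp => ⟨⟨hp.1.trans hp.2.1, hp.2.2⟩, ⟨hp.1, hp.2.1.trans hp.2.2⟩⟩)
  -- pointwise bounds by the suprema
  have hLb : ∀ t ∈ Set.Icc a b, |φ₀ t| ≤ L := fun t ht =>
    hL ▸ le_csSup (isCompact_Icc.image_of_continuousOn hφ₀.abs).bddAbove ⟨t, ht, rfl⟩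
  have hMb : ∀ p ∈ Ω, |K p.1 p.2| ≤ M := fun p hp =>
    hM ▸ le_csSup (hΩcomp.image_of_continuousOn hK.abs).bddAbove ⟨p, hp, rfl⟩
  have hNb : ∀ t ∈ Set.Icc a b, |f t - φ₀ t| ≤ N := fun t ht =>
    hN ▸ le_csSup (isCompact_Icc.image_of_continuousOn (hf.sub hφ₀).abs).bddAbove ⟨t, ht, rfl⟩
  have haab : a ∈ Set.Icc a b := ⟨le_refl a, hab.le⟩
  have hL0 : 0 ≤ L := (abs_nonneg _).trans (hLb a haab)
  have hM0 : 0 ≤ M := (abs_nonneg _).trans (hMb (a, a) ⟨le_refl a, le_refl a, hab.le⟩)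
  have hN0 : 0 ≤ N := (abs_nonneg _).trans (hNb a haab)
  -- continuous global extensions
  obtain ⟨K', hK'c, hK'e⟩ := exists_cont_ext hΩclosed hK
  obtain ⟨f', hf'c, hf'e⟩ := exists_cont_ext isClosed_Icc hf
  obtain ⟨g0, hg0c, hg0e⟩ := exists_cont_ext isClosed_Icc hφ₀
  set K2 : ℝ → ℝ → ℝ := fun s η => K' (s, η) with hK2
  have hK2c : Continuous fun p : ℝ × ℝ => K2 p.1 p.2 := hK'c
  set φ : ℕ → ℝ → ℝ := picard K2 f' lam a g0 with hφ
  have hcont : ∀ n, Continuous (φ n) := by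
    intro n
    induction n with
    | zero => exact hg0c
    | succ n ih =>
      simp only [hφ, picard]
      refine (continuous_const.mul ?_).add hf'c
      exact continuous_parametric_intervalIntegral_of_continuous
        (by fun_prop : Continuous (Function.uncurry fun t η => K2 t η * φ n η)) continuous_id
  have heq : ∀ n, ∀ t ∈ Set.Icc a b, picard K f lam a φ₀ n t = φ n t := by
    intro n
    induction n with
    | zero => intro t ht; exact (hg0e t ht).symm
    | succ n ih =>
      intro t ht
      simp only [hφ, picard]
      have hint : (∫ η in a..t, K t η * picard K f lam a φ₀ n η)
          = ∫ η in a..t, K2 t η * φ n η := by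
        apply intervalIntegral.integral_congr
        intro η hη
        rw [uIcc_of_le ht.1] at hη
        show K t η * picard K f lam a φ₀ n η = K2 t η * φ n η
        have hΩm : (t, η) ∈ Ω := ⟨hη.1, hη.2, ht.2⟩
        rw [ih η ⟨hη.1, hη.2.trans ht.2⟩, show K t η = K2 t η from (hK'e (t, η) hΩm).symm]
      rw [hint, hf'e t ht]
  intro n
  induction n with
  | zero =>
    intro t ht
    rw [heq 1 t ht, heq 0 t ht]
    have hD : φ 1 t - φ 0 t = lam * (∫ η in a..t, K2 t η * g0 η) + (f' t - g0 t) := by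
      simp only [hφ, picard]; ring
    have hIb : |∫ η in a..t, K2 t η * g0 η| ≤ M * L * |t - a| := by
      rw [← Real.norm_eq_abs]
      apply intervalIntegral.norm_integral_le_of_norm_le_const
      intro x hx
      rw [Set.uIoc_of_le ht.1] at hx
      have hxab : x ∈ Set.Icc a b := ⟨hx.1.le, hx.2.trans ht.2⟩
      have hΩm : (t, x) ∈ Ω := ⟨hx.1.le, hx.2, ht.2⟩
      rw [Real.norm_eq_abs, abs_mul, show K2 t x = K t x from hK'e (t, x) hΩm,
        hg0e x hxab]
      exact mul_le_mul (hMb (t, x) hΩm) (hLb x hxab) (abs_nonneg _) hM0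
    have hta : |t - a| = t - a := abs_of_nonneg (by linarith [ht.1])
    have hfg : |f' t - g0 t| ≤ N := by rw [hf'e t ht, hg0e t ht]; exact hNb t ht
    have key : |φ 1 t - φ 0 t| ≤ |lam| * (M * L * (t - a)) + N := calc
      |φ 1 t - φ 0 t| ≤ |lam * ∫ η in a..t, K2 t η * g0 η| + |f' t - g0 t| := by
          rw [hD]; exact abs_add_le _ _
      _ = |lam| * |∫ η in a..t, K2 t η * g0 η| + |f' t - g0 t| := by rw [abs_mul]
      _ ≤ |lam| * (M * L * (t - a)) + N :=
          add_le_add (mul_le_mul_of_nonneg_left (by rw [← hta]; exact hIb) (abs_nonneg lam)) hfg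
    refine le_trans key (le_of_eq ?_)
    norm_num [Nat.factorial]
    ring
  | succ n ih =>
    intro t ht
    rw [heq (n + 2) t ht, heq (n + 1) t ht]
    have hi1 : IntervalIntegrable (fun η => K2 t η * φ (n + 1) η) volume a t :=
      (Continuous.intervalIntegrable (by have h1 := hcont (n + 1); fun_prop) a t)
    have hi2 : IntervalIntegrable (fun η => K2 t η * φ n η) volume a t :=
      (Continuous.intervalIntegrable (by have h0 := hcont n; fun_prop) a t)
    have hD : φ (n + 2) t - φ (n + 1) t
        = lam * ∫ η in a..t, K2 t η * (φ (n + 1) η - φ n η) := by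
      have hsplit : (∫ η in a..t, K2 t η * (φ (n + 1) η - φ n η))
          = (∫ η in a..t, K2 t η * φ (n + 1) η) - ∫ η in a..t, K2 t η * φ n η := by
        rw [← intervalIntegral.integral_sub hi1 hi2]
        congr 1; ext η; ring
      rw [hsplit]
      show (lam * _ + f' t) - (lam * _ + f' t) = _
      ring
    set c1 : ℝ := |lam| ^ (n + 1) * L * M ^ (n + 1) with hc1
    set c2 : ℝ := |lam| ^ n * N * M ^ n with hc2
    set Bnd : ℝ → ℝ := fun η =>
      M * (c1 * (η - a) ^ (n + 1) / (n + 1).factorial + c2 * (η - a) ^ n / n.factorial)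
      with hBnd
    have habs : (∫ η in a..t, |K2 t η * (φ (n + 1) η - φ n η)|) ≤ ∫ η in a..t, Bnd η := by
      apply intervalIntegral.integral_mono_on ht.1
      · exact Continuous.intervalIntegrable
          (by have h1 := hcont (n + 1); have h0 := hcont n; fun_prop) a t
      · exact Continuous.intervalIntegrable (by fun_prop) a t
      · intro x hx
        have hxab : x ∈ Set.Icc a b := ⟨hx.1, hx.2.trans ht.2⟩
        have hΩm : (t, x) ∈ Ω := ⟨hx.1, hx.2, ht.2⟩
        have hih := ih x hxab
        rw [heq (n + 1) x hxab, heq n x hxab] at hih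
        rw [abs_mul, show K2 t x = K t x from hK'e (t, x) hΩm]
        have hBnn : 0 ≤ c1 * (x - a) ^ (n + 1) / (n + 1).factorial
            + c2 * (x - a) ^ n / n.factorial := by
          have := (abs_nonneg (φ (n + 1) x - φ n x)).trans hih
          simpa [hc1, hc2] using this
        calc |K t x| * |φ (n + 1) x - φ n x|
            ≤ M * (c1 * (x - a) ^ (n + 1) / (n + 1).factorial
              + c2 * (x - a) ^ n / n.factorial) := by
              refine mul_le_mul (hMb (t, x) hΩm) ?_ (abs_nonneg _) hM0
              simpa [hc1, hc2] using hih
          _ = Bnd x := rfl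
    have hBval : (∫ η in a..t, Bnd η)
        = M * (c1 * (t - a) ^ (n + 2) / (n + 2).factorial
          + c2 * (t - a) ^ (n + 1) / (n + 1).factorial) := by
      simp only [hBnd]
      rw [intervalIntegral.integral_const_mul, intervalIntegral.integral_add
        (Continuous.intervalIntegrable (by fun_prop) a t)
        (Continuous.intervalIntegrable (by fun_prop) a t),
        integral_term, integral_term]
    calc |φ (n + 1 + 1) t - φ (n + 1) t|
        = |lam| * |∫ η in a..t, K2 t η * (φ (n + 1) η - φ n η)| := by
          rw [hD, abs_mul]
      _ ≤ |lam| * ∫ η in a..t, |K2 t η * (φ (n + 1) η - φ n η)| :=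
          mul_le_mul_of_nonneg_left
            (intervalIntegral.abs_integral_le_integral_abs ht.1) (abs_nonneg lam)
      _ ≤ |lam| * ∫ η in a..t, Bnd η :=
          mul_le_mul_of_nonneg_left habs (abs_nonneg lam)
      _ = |lam| ^ (n + 1 + 1) * L * M ^ (n + 1 + 1) * (t - a) ^ (n + 1 + 1) /
            (n + 1 + 1).factorial +
          |lam| ^ (n + 1) * N * M ^ (n + 1) * (t - a) ^ (n + 1) / (n + 1).factorial := by
          rw [hBval, hc1, hc2]
          have h2 : ((n + 2).factorial : ℝ) ≠ 0 :=
            Nat.cast_ne_zero.mpr (n + 2).factorial_ne_zero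
          have h1 : ((n + 1).factorial : ℝ) ≠ 0 :=
            Nat.cast_ne_zero.mpr (n + 1).factorial_ne_zero
          simp only [show n + 1 + 1 = n + 2 from rfl]
          ring
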